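/- Let n ≥ 1 and let (S_1,…,S_n) be a Γ_n-contraction on a complex Hilbert space H. Let P be the asymptotic limit of S_n*, i.e., the unique positive bounded operator with ⟨P²h,h⟩ = lim_{k→∞} ‖S_n*ᵏh‖² for all h, and let N := closure(range P). Then there exist unique bounded operators Y_1,…,Y_n on N such that Y_i(Ph) = P(S_i*h) for all h ∈ H and i = 1,…,n. Moreover the Y_i pairwise commute, Y_n is an isometry on N, and (Y_1,…,Y_n) is a Γ_n-contraction on N; consequently (Y_1,…,Y_n) is a Γ_n-isometry. -/

import Mathlib

noncomputable section

namespace GammaModel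

/-- The closed symmetrized polydisc `Γ_n = s(closed polydisc)`, where the `k`-th coordinate of
`s` is the `k`-th elementary symmetric polynomial. -/
def GammaSet (n : ℕ) : Set (Fin n → ℂ) :=
  {w | ∃ z : Fin n → ℂ, (∀ j, ‖z j‖ ≤ 1) ∧
    ∀ k : Fin n, w k = ∑ t ∈ Finset.powersetCard (k.1 + 1) Finset.univ, ∏ j ∈ t, z j}

/-- Evaluation of a polynomial at a (commuting) tuple of bounded operators: monomials are
evaluated as ordered products `S 0 ^ m 0 * ⋯ * S (n-1) ^ m (n-1)`. -/
def opEval {n : ℕ} {H : Type*} [NormedAddCommGroup H] [NormedSpace ℂ H]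
    (S : Fin n → H →L[ℂ] H) (p : MvPolynomial (Fin n) ℂ) : H →L[ℂ] H :=
  ∑ m ∈ p.support, MvPolynomial.coeff m p • ((List.finRange n).map (fun i => S i ^ m i)).prod

/-- The sup norm of a polynomial over `Γ_n`. -/
def gammaSup (n : ℕ) (p : MvPolynomial (Fin n) ℂ) : ℝ :=
  sSup ((fun w => ‖MvPolynomial.eval w p‖) '' GammaSet n)

/-- A commuting tuple of bounded operators is a `Γ_n`-contraction if `Γ_n` is a spectral set
for it, i.e. the von Neumann inequality over `Γ_n` holds for all polynomials. -/
def IsGammaContraction {n : ℕ} {H : Type*} [NormedAddCommGroup H] [NormedSpace ℂ H]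
    (S : Fin n → H →L[ℂ] H) : Prop :=
  (∀ i j, S i * S j = S j * S i) ∧
  ∀ p : MvPolynomial (Fin n) ℂ, ‖opEval S p‖ ≤ gammaSup n p

/-- A `Γ_n`-isometry: a `Γ_n`-contraction whose last entry is an isometry. -/
def IsGammaIsometry {n : ℕ} {H : Type*} [NormedAddCommGroup H] [NormedSpace ℂ H]
    (hn : 0 < n) (S : Fin n → H →L[ℂ] H) : Prop :=
  IsGammaContraction S ∧ ∀ x, ‖S ⟨n - 1, Nat.sub_lt hn Nat.one_pos⟩ x‖ = ‖x‖

/-- A `Γ_n`-unitary: a `Γ_n`-contraction whose last entry is a unitary (surjective isometry). -/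
def IsGammaUnitary {n : ℕ} {H : Type*} [NormedAddCommGroup H] [NormedSpace ℂ H]
    (hn : 0 < n) (S : Fin n → H →L[ℂ] H) : Prop :=
  IsGammaContraction S ∧ (∀ x, ‖S ⟨n - 1, Nat.sub_lt hn Nat.one_pos⟩ x‖ = ‖x‖) ∧
    Function.Surjective (S ⟨n - 1, Nat.sub_lt hn Nat.one_pos⟩)

end GammaModel
namespace GammaModel

/-- `P` is the asymptotic limit of `T*`: `P` is positive and
`⟨P²h, h⟩ = lim_k ‖T*ᵏ h‖²` for every `h`. -/
def IsAsymptoticLimit {H : Type*} [NormedAddCommGroup H] [InnerProductSpace ℂ H]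
    [CompleteSpace H] (T P : H →L[ℂ] H) : Prop :=
  P.IsPositive ∧ ∀ h : H,
    Filter.Tendsto (fun k : ℕ => ‖(ContinuousLinearMap.adjoint T ^ k) h‖ ^ 2)
      Filter.atTop (nhds ((@inner ℂ H _ ((P * P) h) h).re))

end GammaModel

open GammaModel ContinuousLinearMap

section AuxAnalytic

open Filter

variable {H : Type*} [NormedAddCommGroup H] [InnerProductSpace ℂ H] [CompleteSpace H]

lemma asymp_norm_tendsto {T P : H →L[ℂ] H} (hP : IsAsymptoticLimit T P) (h : H) :
    Tendsto (fun k : ℕ => ‖(adjoint T ^ k) h‖ ^ 2) atTop (nhds (‖P h‖ ^ 2)) := by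
  have h1 := hP.2 h
  have he : (inner ℂ ((P * P) h) h).re = ‖P h‖ ^ 2 := by
    have hsa : adjoint P = P := by
      rw [← star_eq_adjoint]; exact hP.1.isSelfAdjoint.star_eq
    have : ((P * P) h : H) = adjoint P (P h) := by rw [hsa]; rfl
    rw [this, adjoint_inner_left]
    simpa using inner_self_eq_norm_sq (𝕜 := ℂ) (P h)
  rwa [he] at h1

lemma asymp_bound {T P : H →L[ℂ] H} (hP : IsAsymptoticLimit T P)
    {A : H →L[ℂ] H} (hA : Commute A (adjoint T)) (h : H) :
    ‖P (A h)‖ ≤ ‖A‖ * ‖P h‖ := by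
  have h1 := asymp_norm_tendsto hP (A h)
  have h2 : Tendsto (fun k : ℕ => (‖A‖ * ‖(adjoint T ^ k) h‖) ^ 2) atTop
      (nhds ((‖A‖ * ‖P h‖) ^ 2)) := by
    have := (asymp_norm_tendsto hP h).const_mul (‖A‖ ^ 2)
    simpa [mul_pow] using this
  have hle : ∀ k : ℕ, ‖(adjoint T ^ k) (A h)‖ ^ 2 ≤ (‖A‖ * ‖(adjoint T ^ k) h‖) ^ 2 := by
    intro k
    have hc : (adjoint T ^ k) * A = A * (adjoint T ^ k) := (hA.symm.pow_left k)
    have : (adjoint T ^ k) (A h) = A ((adjoint T ^ k) h) := by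
      have := congrArg (fun B : H →L[ℂ] H => B h) hc
      simpa [ContinuousLinearMap.mul_apply] using this
    rw [this]
    exact pow_le_pow_left₀ (norm_nonneg _) (A.le_opNorm _) 2
  have hfin : ‖P (A h)‖ ^ 2 ≤ (‖A‖ * ‖P h‖) ^ 2 :=
    le_of_tendsto_of_tendsto' h1 h2 hle
  exact le_of_pow_le_pow_left₀ two_ne_zero (mul_nonneg (norm_nonneg _) (norm_nonneg _)) hfin

lemma asymp_isom {T P : H →L[ℂ] H} (hP : IsAsymptoticLimit T P) (h : H) :
    ‖P (adjoint T h)‖ = ‖P h‖ := by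
  have h1 := asymp_norm_tendsto hP (adjoint T h)
  have h2 : Tendsto (fun k : ℕ => ‖(adjoint T ^ k) (adjoint T h)‖ ^ 2) atTop
      (nhds (‖P h‖ ^ 2)) := by
    have := (asymp_norm_tendsto hP h).comp (tendsto_add_atTop_nat 1)
    simpa [Function.comp_def, pow_succ, ContinuousLinearMap.mul_apply, Function.iterate_succ_apply] using this
  have hsq := tendsto_nhds_unique h1 h2
  have := congrArg Real.sqrt hsq
  rwa [Real.sqrt_sq (norm_nonneg _), Real.sqrt_sq (norm_nonneg _)] at this

end AuxAnalytic

section AuxPoly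

lemma star_list_prod {R : Type*} [Monoid R] [StarMul R] (l : List R) :
    star l.prod = ((l.map star).reverse).prod := by
  induction l with
  | nil => simp
  | cons a t ih => simp [star_mul, ih]

lemma gammaSet_conj {n : ℕ} {w : Fin n → ℂ} (hw : w ∈ GammaSet n) :
    (fun k => (starRingEnd ℂ) (w k)) ∈ GammaSet n := by
  obtain ⟨z, hz, hwz⟩ := hw
  refine ⟨fun j => (starRingEnd ℂ) (z j), fun j => by simpa using hz j, fun k => ?_⟩
  show (starRingEnd ℂ) (w k)
      = ∑ t ∈ Finset.powersetCard (k.1 + 1) Finset.univ, ∏ j ∈ t, (starRingEnd ℂ) (z j)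
  rw [hwz k, map_sum]
  exact Finset.sum_congr rfl fun t _ => map_prod _ _ _

lemma eval_conj_norm {n : ℕ} (p : MvPolynomial (Fin n) ℂ) (w : Fin n → ℂ) :
    ‖MvPolynomial.eval w (MvPolynomial.map (starRingEnd ℂ) p)‖
      = ‖MvPolynomial.eval (fun k => (starRingEnd ℂ) (w k)) p‖ := by
  have h1 : MvPolynomial.eval w (MvPolynomial.map (starRingEnd ℂ) p)
      = MvPolynomial.eval₂ (starRingEnd ℂ) w p := MvPolynomial.eval_map _ _ _
  have hg : MvPolynomial.eval (fun k => (starRingEnd ℂ) (w k)) p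
      = MvPolynomial.eval₂ (RingHom.id ℂ) (fun k => (starRingEnd ℂ) (w k)) p := by
    rw [MvPolynomial.eval, MvPolynomial.coe_eval₂Hom]
  have h2 : (starRingEnd ℂ) (MvPolynomial.eval (fun k => (starRingEnd ℂ) (w k)) p)
      = MvPolynomial.eval₂ (starRingEnd ℂ) w p := by
    rw [hg, MvPolynomial.eval₂_comp_left (starRingEnd ℂ) (RingHom.id ℂ)
      (fun k => (starRingEnd ℂ) (w k)) p, RingHom.comp_id]
    congr 1
    funext k
    simp
  rw [h1, ← h2]
  simp

lemma gammaSup_conj (n : ℕ) (p : MvPolynomial (Fin n) ℂ) :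
    gammaSup n (MvPolynomial.map (starRingEnd ℂ) p) = gammaSup n p := by
  unfold gammaSup
  congr 1
  ext y
  constructor
  · rintro ⟨w, hw, rfl⟩
    exact ⟨fun k => (starRingEnd ℂ) (w k), gammaSet_conj hw, (eval_conj_norm p w).symm⟩
  · rintro ⟨w, hw, rfl⟩
    refine ⟨fun k => (starRingEnd ℂ) (w k), gammaSet_conj hw, ?_⟩
    show ‖MvPolynomial.eval (fun k => (starRingEnd ℂ) (w k))
        (MvPolynomial.map (starRingEnd ℂ) p)‖ = ‖MvPolynomial.eval w p‖
    rw [eval_conj_norm]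
    have hww : (fun k => (starRingEnd ℂ) ((starRingEnd ℂ) (w k))) = w := by funext k; simp
    rw [hww]

lemma opEval_star {n : ℕ} {H : Type*} [NormedAddCommGroup H] [InnerProductSpace ℂ H]
    [CompleteSpace H] (S : Fin n → H →L[ℂ] H) (hc : ∀ i j, S i * S j = S j * S i)
    (p : MvPolynomial (Fin n) ℂ) :
    star (opEval (fun i => star (S i)) p) = opEval S (MvPolynomial.map (starRingEnd ℂ) p) := by
  unfold opEval
  rw [MvPolynomial.support_map_of_injective _ (starRingEnd ℂ).injective, star_sum]
  refine Finset.sum_congr rfl fun m _ => ?_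
  have hprod : star ((List.map (fun i => star (S i) ^ m i) (List.finRange n)).prod)
      = (List.map (fun i => S i ^ m i) (List.finRange n)).prod := by
    rw [star_list_prod]
    have hmap : (List.map (fun i => star (S i) ^ m i) (List.finRange n)).map star
        = List.map (fun i => S i ^ m i) (List.finRange n) := by
      rw [List.map_map]
      refine List.map_congr_left fun i _ => ?_
      simp [star_pow]
    rw [hmap]
    have hbase : List.Pairwise (fun i j : Fin n => Commute (S i ^ m i) (S j ^ m j))
        (List.finRange n) :=
      List.pairwise_iff_forall_sublist.mpr fun _ => Commute.pow_pow (hc _ _) _ _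
    have hpw : List.Pairwise Commute (List.map (fun i => S i ^ m i) (List.finRange n)) :=
      List.Pairwise.map _ (fun a b h => h) hbase
    refine List.Perm.prod_eq' (List.reverse_perm _) ?_
    rw [List.pairwise_reverse]
    exact hpw.imp fun h => h.symm
  rw [star_smul, hprod, MvPolynomial.coeff_map]
  rfl

end AuxPoly


/-- Let `(S_1, …, S_n)` be a `Γ_n`-contraction, `P` the asymptotic limit of
`S_n*` and `N = closure (range P)`. Then there are unique bounded operators `Y_i` on `N` with
`Y_i (Ph) = P (S_i* h)`; they pairwise commute, `Y_n` is an isometry, and `(Y_1, …, Y_n)` is a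
`Γ_n`-contraction, hence a `Γ_n`-isometry, on `N`. -/
theorem canonical_gamma_isometry_on_asymptotic_range {n : ℕ} (hn : 1 ≤ n)
    {H : Type*} [NormedAddCommGroup H] [InnerProductSpace ℂ H] [CompleteSpace H]
    (S : Fin n → H →L[ℂ] H) (hS : IsGammaContraction S)
    (P : H →L[ℂ] H) (hP : IsAsymptoticLimit (S ⟨n - 1, by omega⟩) P) :
    (∃! Y : Fin n →
        (↥((LinearMap.range (P : H →ₗ[ℂ] H)).topologicalClosure) →L[ℂ] ↥((LinearMap.range (P : H →ₗ[ℂ] H)).topologicalClosure)),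
      ∀ (i : Fin n) (h : H),
        (↑(Y i ⟨P h, Submodule.le_topologicalClosure _ (LinearMap.mem_range_self _ h)⟩) : H)
          = P (adjoint (S i) h)) ∧
    (∀ Y : Fin n →
        (↥((LinearMap.range (P : H →ₗ[ℂ] H)).topologicalClosure) →L[ℂ] ↥((LinearMap.range (P : H →ₗ[ℂ] H)).topologicalClosure)),
      (∀ (i : Fin n) (h : H),
        (↑(Y i ⟨P h, Submodule.le_topologicalClosure _ (LinearMap.mem_range_self _ h)⟩) : H)
          = P (adjoint (S i) h)) →
      IsGammaIsometry (by omega) Y) := by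
  classical
  have hpos : 0 < n := hn
  set T : H →L[ℂ] H := S ⟨n - 1, by omega⟩ with hTdef
  have hPT : IsAsymptoticLimit T P := hP
  set Np := (LinearMap.range (P : H →ₗ[ℂ] H)).topologicalClosure with hNpdef
  haveI : CompleteSpace ↥Np := (Submodule.isClosed_topologicalClosure _).completeSpace_coe
  have hle : LinearMap.range (P : H →ₗ[ℂ] H) ≤ Np := Submodule.le_topologicalClosure _
  have memN : ∀ h : H, P h ∈ Np := fun h => hle (LinearMap.mem_range_self _ h)
  have hAd : ∀ i : Fin n, adjoint (S i) = star (S i) := fun i => (star_eq_adjoint (S i)).symm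
  have hcomm_star : ∀ i j : Fin n, Commute (star (S i)) (star (S j)) := by
    intro i j
    have := congrArg star (hS.1 j i)
    rwa [star_mul, star_mul] at this
  -- congruence modulo ker P
  have hcong : ∀ (A : H →L[ℂ] H), Commute A (adjoint T) → ∀ a b : H, P a = P b →
      P (A a) = P (A b) := by
    intro A hA a b hab
    have hb := asymp_bound hPT hA (a - b)
    have hab0 : P (a - b) = 0 := by rw [map_sub, hab, sub_self]
    rw [hab0, norm_zero, mul_zero] at hb
    have h0 : P (A (a - b)) = 0 := norm_le_zero_iff.mp hb
    rw [map_sub, map_sub] at h0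
    exact sub_eq_zero.mp h0
  have hstarT_comm : ∀ i : Fin n, Commute (star (S i)) (adjoint T) := by
    intro i
    rw [← star_eq_adjoint]
    exact hcomm_star i _
  have hcong' : ∀ (i : Fin n) (a b : H), P a = P b →
      P (star (S i) a) = P (star (S i) b) := fun i => hcong _ (hstarT_comm i)
  -- inclusion e
  have he_normeq : ∀ x : ↥(LinearMap.range (P : H →ₗ[ℂ] H)), ‖(Submodule.inclusion hle x : ↥Np)‖ = ‖x‖ :=
    fun x => rfl
  let e : ↥(LinearMap.range (P : H →ₗ[ℂ] H)) →L[ℂ] ↥Np :=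
    LinearMap.mkContinuous (Submodule.inclusion hle) 1
      (fun x => by rw [he_normeq, one_mul])
  have he_coe : ∀ x : ↥(LinearMap.range (P : H →ₗ[ℂ] H)), (↑(e x) : H) = ↑x := fun x => rfl
  have he_isom : Isometry e :=
    AddMonoidHomClass.isometry_of_norm e (fun x => rfl)
  have he_dense : DenseRange e := by
    intro y
    rw [closure_subtype]
    have himg : (Subtype.val '' Set.range e : Set H) = ↑(LinearMap.range (P : H →ₗ[ℂ] H)) := by
      ext v
      constructor
      · rintro ⟨u, ⟨x, rfl⟩, rfl⟩
        rw [he_coe]; exact x.2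
      · intro hv
        exact ⟨e ⟨v, hv⟩, ⟨⟨v, hv⟩, rfl⟩, he_coe _⟩
    rw [himg]
    have hcls : (Np : Set H) = closure (LinearMap.range (P : H →ₗ[ℂ] H) : Set H) :=
      Submodule.topologicalClosure_coe _
    exact hcls ▸ y.2
  -- choice of preimages
  let pick : ↥(LinearMap.range (P : H →ₗ[ℂ] H)) → H := fun x => Classical.choose (LinearMap.mem_range.mp x.2)
  have hpick : ∀ x : ↥(LinearMap.range (P : H →ₗ[ℂ] H)), P (pick x) = ↑x := by
    intro x
    exact Classical.choose_spec (LinearMap.mem_range.mp x.2)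
  -- the operators on the range of P
  have hbnd : ∀ (i : Fin n) (h : H), ‖P (star (S i) h)‖ ≤ ‖S i‖ * ‖P h‖ := by
    intro i h
    have := asymp_bound hPT (hstarT_comm i) h
    simpa [norm_star] using this
  let f : Fin n → ↥(LinearMap.range (P : H →ₗ[ℂ] H)) →L[ℂ] ↥Np := fun i =>
    LinearMap.mkContinuous
      { toFun := fun x => ⟨P (star (S i) (pick x)), memN _⟩
        map_add' := by
          intro x y
          apply Subtype.ext
          show P (star (S i) (pick (x + y)))
            = P (star (S i) (pick x)) + P (star (S i) (pick y))
          have h1 : P (pick (x + y)) = P (pick x + pick y) := by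
            rw [map_add, hpick, hpick, hpick]
            rfl
          rw [hcong' i _ _ h1, map_add, map_add]
        map_smul' := by
          intro c x
          apply Subtype.ext
          show P (star (S i) (pick (c • x))) = c • P (star (S i) (pick x))
          have h1 : P (pick (c • x)) = P (c • pick x) := by
            rw [map_smul, hpick, hpick]
            rfl
          rw [hcong' i _ _ h1, map_smul, map_smul] }
      ‖S i‖
      (by
        intro x
        show ‖P (star (S i) (pick x))‖ ≤ ‖S i‖ * ‖x‖
        have := hbnd i (pick x)
        rwa [hpick] at this)
  have hf_coe : ∀ (i : Fin n) (x : ↥(LinearMap.range (P : H →ₗ[ℂ] H))),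
      (↑(f i x) : H) = P (star (S i) (pick x)) := fun i x => rfl
  -- the extensions
  let Y₀ : Fin n → ↥Np →L[ℂ] ↥Np := fun i =>
    (f i).extend e
  have hY₀ : ∀ (i : Fin n) (h : H),
      (↑(Y₀ i ⟨P h, memN h⟩) : H) = P (adjoint (S i) h) := by
    intro i h
    have hx : (⟨P h, memN h⟩ : ↥Np) = e ⟨P h, LinearMap.mem_range_self _ h⟩ :=
      Subtype.ext rfl
    rw [hx, ContinuousLinearMap.extend_eq _ he_dense he_isom.isUniformInducing, hf_coe, hAd]
    exact hcong' i _ _ (hpick ⟨P h, LinearMap.mem_range_self _ h⟩)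
  -- uniqueness of operators with the intertwining property
  have huniq : ∀ Y₁ Y₂ : Fin n → (↥Np →L[ℂ] ↥Np),
      (∀ (i : Fin n) (h : H), (↑(Y₁ i ⟨P h, memN h⟩) : H) = P (adjoint (S i) h)) →
      (∀ (i : Fin n) (h : H), (↑(Y₂ i ⟨P h, memN h⟩) : H) = P (adjoint (S i) h)) →
      Y₁ = Y₂ := by
    intro Y₁ Y₂ h₁ h₂
    funext i
    apply ContinuousLinearMap.coeFn_injective
    refine he_dense.equalizer (Y₁ i).continuous (Y₂ i).continuous ?_
    funext x
    obtain ⟨h, hh⟩ := LinearMap.mem_range.mp x.2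
    have hx : e x = (⟨P h, memN h⟩ : ↥Np) := Subtype.ext (by rw [he_coe, ← hh]; rfl)
    show Y₁ i (e x) = Y₂ i (e x)
    rw [hx]
    exact Subtype.ext ((h₁ i h).trans ((h₂ i h).symm))
  constructor
  · exact ⟨Y₀, fun i h => hY₀ i h, fun Z hZ => huniq Z Y₀ (fun i h => hZ i h) hY₀⟩
  -- part 2: any such tuple is a Γ_n-isometry
  intro Y hY
  have hYs : ∀ (i : Fin n) (h : H),
      Y i ⟨P h, memN h⟩ = ⟨P (star (S i) h), memN _⟩ := by
    intro i h
    apply Subtype.ext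
    rw [← hAd]
    exact hY i h
  -- powers
  have hpow : ∀ (a : Fin n) (k : ℕ) (h : H),
      (Y a ^ k) ⟨P h, memN h⟩ = ⟨P ((star (S a) ^ k) h), memN _⟩ := by
    intro a k
    induction k with
    | zero => intro h; simp only [pow_zero, ContinuousLinearMap.one_apply]
    | succ k ih =>
      intro h
      rw [pow_succ', pow_succ', ContinuousLinearMap.mul_apply, ContinuousLinearMap.mul_apply,
        ih h, hYs a ((star (S a) ^ k) h)]
  -- list products
  have hlist : ∀ (l : List (Fin n)) (m : Fin n →₀ ℕ) (h : H),
      ((l.map (fun i => Y i ^ m i)).prod) ⟨P h, memN h⟩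
        = ⟨P (((l.map (fun i => star (S i) ^ m i)).prod) h), memN _⟩ := by
    intro l m
    induction l with
    | nil => intro h; simp only [List.map_nil, List.prod_nil, ContinuousLinearMap.one_apply]
    | cons a t ih =>
      intro h
      simp only [List.map_cons, List.prod_cons, ContinuousLinearMap.mul_apply]
      rw [ih h, hpow a (m a)]
  -- the relation for polynomials
  have hRel : ∀ (p : MvPolynomial (Fin n) ℂ) (h : H),
      (↑(opEval Y p ⟨P h, memN h⟩) : H) = P (opEval (fun i => star (S i)) p h) := by
    intro p h
    show (↑(opEval Y p ⟨P h, memN h⟩) : H) = P (opEval (fun i => star (S i)) p h)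
    unfold opEval
    rw [ContinuousLinearMap.sum_apply, AddSubmonoidClass.coe_finset_sum,
      ContinuousLinearMap.sum_apply, map_sum]
    refine Finset.sum_congr rfl fun m _ => ?_
    rw [ContinuousLinearMap.smul_apply, ContinuousLinearMap.smul_apply, map_smul,
      Submodule.coe_smul]
    congr 1
    exact congrArg Subtype.val (hlist (List.finRange n) m h)
  -- norm bound for opEval Y p
  have hcontr : ∀ p : MvPolynomial (Fin n) ℂ, ‖opEval Y p‖ ≤ gammaSup n p := by
    intro p
    have hAcomm : Commute (opEval (fun i => star (S i)) p) (adjoint T) := by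
      unfold opEval
      refine Commute.sum_left _ _ _ (fun m _ => ?_)
      refine Commute.smul_left ?_ _
      refine Commute.list_prod_left _ _ (fun x hx => ?_)
      obtain ⟨i, _, rfl⟩ := List.mem_map.mp hx
      exact (hstarT_comm i).pow_left _
    have hAnorm : ‖opEval (fun i => star (S i)) p‖ ≤ gammaSup n p := by
      rw [← norm_star, opEval_star S hS.1 p]
      calc ‖opEval S (MvPolynomial.map (starRingEnd ℂ) p)‖
          ≤ gammaSup n (MvPolynomial.map (starRingEnd ℂ) p) := hS.2 _
        _ = gammaSup n p := gammaSup_conj n p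
    have hpt : ∀ x : ↥Np, ‖opEval Y p x‖ ≤ ‖opEval (fun i => star (S i)) p‖ * ‖x‖ := by
      have hclosed : IsClosed {x : ↥Np |
          ‖opEval Y p x‖ ≤ ‖opEval (fun i => star (S i)) p‖ * ‖x‖} :=
        isClosed_le ((opEval Y p).continuous.norm)
          (continuous_const.mul continuous_norm)
      intro x
      refine he_dense.induction_on x hclosed ?_
      intro a
      obtain ⟨h, hh⟩ := LinearMap.mem_range.mp a.2
      have hx : e a = (⟨P h, memN h⟩ : ↥Np) := Subtype.ext (by rw [he_coe, ← hh]; rfl)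
      show ‖opEval Y p (e a)‖ ≤ _
      rw [hx]
      have hnorm1 : ‖opEval Y p ⟨P h, memN h⟩‖ = ‖P (opEval (fun i => star (S i)) p h)‖ := by
        rw [← hRel p h]; rfl
      have hnorm2 : ‖(⟨P h, memN h⟩ : ↥Np)‖ = ‖P h‖ := rfl
      rw [hnorm1, hnorm2]
      exact asymp_bound hPT hAcomm h
    calc ‖opEval Y p‖ ≤ ‖opEval (fun i => star (S i)) p‖ :=
          ContinuousLinearMap.opNorm_le_bound _ (norm_nonneg _) hpt
      _ ≤ gammaSup n p := hAnorm
  -- commutativity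
  have hYcomm : ∀ i j : Fin n, Y i * Y j = Y j * Y i := by
    intro i j
    apply ContinuousLinearMap.coeFn_injective
    refine he_dense.equalizer (Y i * Y j).continuous (Y j * Y i).continuous ?_
    funext x
    obtain ⟨h, hh⟩ := LinearMap.mem_range.mp x.2
    have hx : e x = (⟨P h, memN h⟩ : ↥Np) := Subtype.ext (by rw [he_coe, ← hh]; rfl)
    show (Y i * Y j) (e x) = (Y j * Y i) (e x)
    rw [hx]
    have hij : ∀ (i j : Fin n) (h : H),
        (Y i * Y j) (⟨P h, memN h⟩ : ↥Np) = ⟨P (star (S i) (star (S j) h)), memN _⟩ := by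
      intro i j h
      rw [ContinuousLinearMap.mul_apply, hYs j h, hYs i (star (S j) h)]
    rw [hij i j h, hij j i h]
    apply Subtype.ext
    show P (star (S i) (star (S j) h)) = P (star (S j) (star (S i) h))
    have hcs := congrArg (fun B : H →L[ℂ] H => P (B h)) (hcomm_star i j)
    simpa [ContinuousLinearMap.mul_apply] using hcs
  -- isometry of the last coordinate
  have hYiso : ∀ x : ↥Np, ‖Y ⟨n - 1, Nat.sub_lt hpos Nat.one_pos⟩ x‖ = ‖x‖ := by
    have hclosed : IsClosed {x : ↥Np | ‖Y ⟨n - 1, Nat.sub_lt hpos Nat.one_pos⟩ x‖ = ‖x‖} :=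
      isClosed_eq ((Y _).continuous.norm) continuous_norm
    intro x
    refine he_dense.induction_on x hclosed ?_
    intro a
    obtain ⟨h, hh⟩ := LinearMap.mem_range.mp a.2
    have hx : e a = (⟨P h, memN h⟩ : ↥Np) := Subtype.ext (by rw [he_coe, ← hh]; rfl)
    show ‖Y ⟨n - 1, Nat.sub_lt hpos Nat.one_pos⟩ (e a)‖ = ‖e a‖
    rw [hx]
    have h1 : ‖Y ⟨n - 1, Nat.sub_lt hpos Nat.one_pos⟩ (⟨P h, memN h⟩ : ↥Np)‖
        = ‖P (adjoint T h)‖ := by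
      have := hY ⟨n - 1, Nat.sub_lt hpos Nat.one_pos⟩ h
      show ‖(↑(Y ⟨n - 1, Nat.sub_lt hpos Nat.one_pos⟩ (⟨P h, memN h⟩ : ↥Np)) : H)‖ = _
      rw [this]
    have h2 : ‖(⟨P h, memN h⟩ : ↥Np)‖ = ‖P h‖ := rfl
    rw [h1, h2, asymp_isom hPT h]
  exact ⟨⟨hYcomm, hcontr⟩, hYiso⟩
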